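/- For any undirected graph G: dim(G × K⃗_2) ≤ dim(G ×_e K⃗_2) + χ(G), where K⃗_2 is the poset 1→2, G × K⃗_2 has edges (u,1)(v,2) for uv ∈ E(G), and G ×_e K⃗_2 additionally has edges (u,1)(u,2) for all u. -/

import Mathlib

open SimpleGraph

def tensor {α β : Type*} (G : SimpleGraph α) (H : SimpleGraph β) :
    SimpleGraph (α × β) where
  Adj p q := G.Adj p.1 q.1 ∧ H.Adj p.2 q.2
  symm := ⟨fun p q h => ⟨h.1.symm, h.2.symm⟩⟩
  loopless := ⟨fun p h => G.loopless.irrefl p.1 h.1⟩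

def etensor {α β : Type*} (G : SimpleGraph α) (H : SimpleGraph β) :
    SimpleGraph (α × β) where
  Adj p q := (G.Adj p.1 q.1 ∨ p.1 = q.1) ∧ H.Adj p.2 q.2
  symm := ⟨fun p q h => ⟨h.1.imp (fun h' => h'.symm) (fun h' => h'.symm), h.2.symm⟩⟩
  loopless := ⟨fun p h => H.loopless.irrefl p.2 h.2⟩

def disj {α β : Type*} (G : SimpleGraph α) (H : SimpleGraph β) :
    SimpleGraph (α × β) where
  Adj p q := G.Adj p.1 q.1 ∨ H.Adj p.2 q.2
  symm := ⟨fun p q h => h.imp (fun h' => h'.symm) (fun h' => h'.symm)⟩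
  loopless := ⟨fun p h => h.elim (G.loopless.irrefl p.1) (H.loopless.irrefl p.2)⟩

def lexProd {α β : Type*} (G : SimpleGraph α) (H : SimpleGraph β) :
    SimpleGraph (α × β) where
  Adj p q := G.Adj p.1 q.1 ∨ (p.1 = q.1 ∧ H.Adj p.2 q.2)
  symm := ⟨fun p q h => h.imp (fun h' => h'.symm) (fun h' => ⟨h'.1.symm, h'.2.symm⟩)⟩
  loopless := ⟨fun p h => h.elim (G.loopless.irrefl p.1) (fun h' => H.loopless.irrefl p.2 h'.2)⟩

def disjPow {α : Type*} (G : SimpleGraph α) (k : ℕ) : SimpleGraph (Fin k → α) where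
  Adj x y := ∃ i, G.Adj (x i) (y i)
  symm := ⟨fun x y h => h.imp (fun i hi => hi.symm)⟩
  loopless := ⟨fun x h => h.elim (fun i hi => G.loopless.irrefl (x i) hi)⟩

def lexPow {α : Type*} (G : SimpleGraph α) (k : ℕ) : SimpleGraph (Fin k → α) where
  Adj x y := ∃ i, G.Adj (x i) (y i) ∧ ∀ j, j < i → x j = y j
  symm := ⟨fun x y h => h.imp (fun i hi => ⟨hi.1.symm, fun j hj => (hi.2 j hj).symm⟩)⟩
  loopless := ⟨fun x h => h.elim (fun i hi => G.loopless.irrefl (x i) hi.1)⟩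

def IsIndMatching {V : Type*} (G : SimpleGraph V) {n : ℕ} (a b : Fin n → V) : Prop :=
  (∀ i, G.Adj (a i) (b i)) ∧
  ∀ i j, i ≠ j → ¬ G.Adj (a i) (a j) ∧ ¬ G.Adj (a i) (b j) ∧ ¬ G.Adj (b i) (b j)

noncomputable def imNum {V : Type*} (G : SimpleGraph V) : ℕ :=
  sSup {n | ∃ a b : Fin n → V, IsIndMatching G a b}

def SemiCond {V : Type*} (G : SimpleGraph V) (σ : V → ℕ) (u u' v v' : V) : Prop :=
  σ u < σ u' → σ u < σ v → σ v < σ v' → ¬ G.Adj u v ∧ ¬ G.Adj u v'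

def IsSemiIndMatching {V : Type*} (G : SimpleGraph V) (σ : V → ℕ) {n : ℕ}
    (a b : Fin n → V) : Prop :=
  (∀ i, G.Adj (a i) (b i)) ∧
  (∀ i j, i ≠ j → a i ≠ a j ∧ a i ≠ b j ∧ b i ≠ b j) ∧
  (∀ i j, i ≠ j →
    SemiCond G σ (a i) (b i) (a j) (b j) ∧ SemiCond G σ (a i) (b i) (b j) (a j) ∧
    SemiCond G σ (b i) (a i) (a j) (b j) ∧ SemiCond G σ (b i) (a i) (b j) (a j))

noncomputable def simNumOrd {V : Type*} (G : SimpleGraph V) (σ : V → ℕ) : ℕ :=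
  sSup {n | ∃ a b : Fin n → V, IsSemiIndMatching G σ a b}

noncomputable def simNum {V : Type*} (G : SimpleGraph V) : ℕ :=
  sSup {n | ∃ σ : V → ℕ, Function.Injective σ ∧
    ∃ a b : Fin n → V, IsSemiIndMatching G σ a b}

noncomputable def indepNum {V : Type*} (G : SimpleGraph V) : ℕ :=
  sSup {n | ∃ s : Finset V, s.card = n ∧ ∀ u ∈ s, ∀ v ∈ s, ¬ G.Adj u v}

noncomputable def chromNum {V : Type*} (G : SimpleGraph V) : ℕ :=
  sInf {n | G.Colorable n}

def vecLT {d : ℕ} (x y : Fin d → ℝ) : Prop := (∀ i, x i ≤ y i) ∧ ∃ i, x i < y i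

def Realizes {V : Type*} (R : V → V → Prop) {d : ℕ} (φ : V → Fin d → ℝ) : Prop :=
  ∀ u v, u ≠ v → (R u v ↔ vecLT (φ u) (φ v))

noncomputable def posetDim {V : Type*} (R : V → V → Prop) : ℕ :=
  sInf {d | ∃ φ : V → Fin d → ℝ, Realizes R φ}

def IsHeightTwoPoset {V : Type*} (R : V → V → Prop) : Prop :=
  (∀ u, ¬ Relation.TransGen R u u) ∧
  (∀ u v w, R u v → R v w → R u w) ∧
  (∀ u, (∀ v, ¬ R v u) ∨ (∀ v, ¬ R u v))

def etensorRel {α β : Type*} (G : SimpleGraph α) (R : β → β → Prop) :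
    α × β → α × β → Prop :=
  fun p q => (G.Adj p.1 q.1 ∨ p.1 = q.1) ∧ R p.2 q.2

def tensorRel {α β : Type*} (G : SimpleGraph α) (R : β → β → Prop) :
    α × β → α × β → Prop :=
  fun p q => G.Adj p.1 q.1 ∧ R p.2 q.2

def K2dir : Fin 2 → Fin 2 → Prop := fun i j => i = 0 ∧ j = 1


section Aux12

variable {V : Type*}

open Classical in
noncomputable def etReal (G : SimpleGraph V) : V × Fin 2 → (V ⊕ V) → ℝ :=
  fun p w =>
    Sum.elim
      (fun v => if p.2 = 0 then (if G.Adj p.1 v ∨ p.1 = v then (-1 : ℝ) else 0)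
                else (if p.1 = v then 1 else 0))
      (fun v => if p.2 = 0 then (if p.1 = v then (1 : ℝ) else 0)
                else (if G.Adj p.1 v ∨ p.1 = v then 1 else 0)) w

def vecLT' {ι : Type*} (x y : ι → ℝ) : Prop := (∀ i, x i ≤ y i) ∧ ∃ i, x i < y i

lemma vecLT_comp {ι : Type*} {d : ℕ} (e : Fin d ≃ ι) (x y : ι → ℝ) :
    vecLT (fun i => x (e i)) (fun i => y (e i)) ↔ vecLT' x y := by
  constructor
  · rintro ⟨h1, i, h2⟩
    exact ⟨fun w => by simpa using h1 (e.symm w), e i, h2⟩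
  · rintro ⟨h1, w, h2⟩
    exact ⟨fun i => h1 (e i), e.symm w, by simpa using h2⟩

lemma etReal_realizes' (G : SimpleGraph V) (p q : V × Fin 2) (hpq : p ≠ q) :
    etensorRel G K2dir p q ↔ vecLT' (etReal G p) (etReal G q) := by
  classical
  obtain ⟨u, s⟩ := p
  obtain ⟨v, t⟩ := q
  fin_cases s <;> fin_cases t
  · -- s = 0, t = 0
    have huv : u ≠ v := by rintro rfl; exact hpq rfl
    simp only [etensorRel, K2dir]
    constructor
    · rintro ⟨-, -, h⟩; exact absurd h (by decide)
    · rintro ⟨hle, -⟩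
      have := hle (Sum.inr u)
      simp [etReal, huv.symm] at this
      norm_num at this
  · -- s = 0, t = 1
    simp only [etensorRel, K2dir]
    constructor
    · rintro ⟨hN, -, -⟩
      refine ⟨fun w => ?_, Sum.inl v, ?_⟩
      · rcases w with v' | v'
        · simp only [etReal, Sum.elim_inl]
          norm_num
          split_ifs <;> norm_num
        · simp only [etReal, Sum.elim_inr]
          norm_num
          split_ifs with h1 h2 <;> try norm_num
          subst h1
          exact h2 (hN.imp (fun h => h.symm) (fun h => h.symm))
      · simp [etReal, hN]
    · rintro ⟨hle, -⟩
      refine ⟨?_, rfl, rfl⟩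
      by_contra hN
      have hN' : ¬ (G.Adj v u ∨ v = u) := fun h => hN (h.imp (fun h => h.symm) (fun h => h.symm))
      have := hle (Sum.inr u)
      simp [etReal, hN'] at this
      norm_num at this
  · -- s = 1, t = 0
    simp only [etensorRel, K2dir]
    constructor
    · rintro ⟨-, h, -⟩; exact absurd h (by decide)
    · rintro ⟨hle, -⟩
      have := hle (Sum.inl u)
      simp only [etReal, Sum.elim_inl] at this
      norm_num at this
      split_ifs at this <;> norm_num at this
  · -- s = 1, t = 1
    have huv : u ≠ v := by rintro rfl; exact hpq rfl
    simp only [etensorRel, K2dir]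
    constructor
    · rintro ⟨-, h, -⟩; exact absurd h (by decide)
    · rintro ⟨hle, -⟩
      have := hle (Sum.inl u)
      simp [etReal, huv.symm] at this
      norm_num at this

lemma et_nonempty (G : SimpleGraph V) [Fintype V] :
    {d | ∃ φ : V × Fin 2 → Fin d → ℝ, Realizes (etensorRel G K2dir) φ}.Nonempty := by
  classical
  refine ⟨Fintype.card (V ⊕ V),
    fun p i => etReal G p ((Fintype.equivFin (V ⊕ V)).symm i), fun p q hpq => ?_⟩
  rw [etReal_realizes' G p q hpq]
  exact (vecLT_comp (Fintype.equivFin (V ⊕ V)).symm (etReal G p) (etReal G q)).symm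

end Aux12

def colCoord {V : Type*} {k : ℕ} (C : V → Fin k) : V × Fin 2 → Fin k → ℝ :=
  fun p j => if p.2 = 0 then (if C p.1 = j then 1 else 0) else (if C p.1 = j then 0 else 1)

lemma combine_realizes {V : Type*} (G : SimpleGraph V) {d k : ℕ}
    (φ : V × Fin 2 → Fin d → ℝ) (hφ : Realizes (etensorRel G K2dir) φ)
    (C : G.Coloring (Fin k)) :
    Realizes (tensorRel G K2dir)
      (fun p => Fin.addCases (φ p) (colCoord (⇑C) p)) := by
  classical
  intro p q hpq
  obtain ⟨u, s⟩ := p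
  obtain ⟨v, t⟩ := q
  constructor
  · rintro ⟨hadj, hs, ht⟩
    simp only at hs ht
    subst hs; subst ht
    have hpq' : ((u, (0 : Fin 2)) : V × Fin 2) ≠ (v, 1) := by simp
    obtain ⟨hle, i, hlt⟩ := (hφ _ _ hpq').mp ⟨Or.inl hadj, rfl, rfl⟩
    refine ⟨fun w => ?_, Fin.castAdd k i, by simpa using hlt⟩
    induction w using Fin.addCases with
    | left i => simpa using hle i
    | right j =>
      simp only [Fin.addCases_right, colCoord]
      have hcne : C u ≠ C v := C.valid hadj
      by_cases h1 : C u = j <;> by_cases h2 : C v = j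
      · exact absurd (h1.trans h2.symm) hcne
      · simp [h1, h2]
      · simp [h1, h2]
      · simp [h1, h2]
  · rintro ⟨hle, w, hlt⟩
    have holdle : ∀ i, φ (u, s) i ≤ φ (v, t) i := fun i => by
      simpa using hle (Fin.castAdd k i)
    have hnewle : ∀ j, colCoord (⇑C) (u, s) j ≤ colCoord (⇑C) (v, t) j := fun j => by
      simpa using hle (Fin.natAdd d j)
    by_cases hstrict : ∃ i, φ (u, s) i < φ (v, t) i
    · obtain ⟨hN, hs, ht⟩ := (hφ _ _ hpq).mpr ⟨holdle, hstrict⟩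
      simp only at hs ht
      rcases hN with hadj | hequ
      · exact ⟨hadj, hs, ht⟩
      · exfalso
        simp only at hequ
        subst hequ; subst hs; subst ht
        have := hnewle (C u)
        simp [colCoord] at this
        norm_num at this
    · -- all old coordinates are equal
      exfalso
      have heq : ∀ i, φ (u, s) i = φ (v, t) i := by
        push_neg at hstrict
        exact fun i => le_antisymm (holdle i) (hstrict i)
      have heqf : φ (u, s) = φ (v, t) := funext heq
      have hnot1 : ¬ etensorRel G K2dir (u, s) (v, t) := by
        intro h
        obtain ⟨-, i, hi⟩ := (hφ _ _ hpq).mp h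
        exact absurd (heq i) (ne_of_lt hi)
      have hηs : ∃ j, colCoord (⇑C) (u, s) j < colCoord (⇑C) (v, t) j := by
        induction w using Fin.addCases with
        | left i => exact absurd (heq i) (ne_of_lt (by simpa using hlt))
        | right j => exact ⟨j, by simpa using hlt⟩
      rcases (by omega : s = 0 ∨ s = 1) with rfl | rfl <;>
        rcases (by omega : t = 0 ∨ t = 1) with rfl | rfl
      · -- (0,0)
        by_cases hc : C u = C v
        · obtain ⟨j, hj⟩ := hηs
          simp [colCoord, hc] at hj
        · have hc' : ¬ C v = C u := fun h => hc h.symm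
          have := hnewle (C u)
          simp [colCoord, hc'] at this
          norm_num at this
      · -- (0,1)
        have huv : u ≠ v := by
          rintro rfl
          exact hnot1 ⟨Or.inr rfl, rfl, rfl⟩
        have hr1 : ((u, (0 : Fin 2)) : V × Fin 2) ≠ (u, 1) := by simp
        have hv1 := (hφ _ _ hr1).mp ⟨Or.inr rfl, rfl, rfl⟩
        rw [heqf] at hv1
        have hr2 : ((v, (1 : Fin 2)) : V × Fin 2) ≠ (u, 1) := by simp [huv.symm]
        obtain ⟨-, h2, -⟩ := (hφ _ _ hr2).mpr hv1
        simp [K2dir] at h2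
      · -- (1,0)
        by_cases huv : u = v
        · subst huv
          have hr1 : ((u, (0 : Fin 2)) : V × Fin 2) ≠ (u, 1) := by simp
          obtain ⟨-, i, hi⟩ := (hφ _ _ hr1).mp ⟨Or.inr rfl, rfl, rfl⟩
          rw [← heqf] at hi
          exact absurd rfl (ne_of_lt hi)
        · have hr1 : ((v, (0 : Fin 2)) : V × Fin 2) ≠ (v, 1) := by simp
          have hv1 := (hφ _ _ hr1).mp ⟨Or.inr rfl, rfl, rfl⟩
          rw [← heqf] at hv1
          have hr2 : ((u, (1 : Fin 2)) : V × Fin 2) ≠ (v, 1) := by simp [huv]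
          obtain ⟨-, h2, -⟩ := (hφ _ _ hr2).mpr hv1
          simp [K2dir] at h2
      · -- (1,1)
        have huv : u ≠ v := by rintro rfl; exact hpq rfl
        by_cases hc : C u = C v
        · obtain ⟨j, hj⟩ := hηs
          simp [colCoord, hc] at hj
        · have := hnewle (C v)
          simp [colCoord, hc] at this
          norm_num at this

theorem stmt12 {V : Type*} [Fintype V] (G : SimpleGraph V) :
    posetDim (tensorRel G K2dir) ≤ posetDim (etensorRel G K2dir) + chromNum G := by
  classical
  have hcol : G.Colorable (chromNum G) :=
    Nat.sInf_mem (⟨Fintype.card V, G.colorable_of_fintype⟩ : {n | G.Colorable n}.Nonempty)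
  obtain ⟨C⟩ := hcol
  obtain ⟨φ, hφ⟩ : ∃ φ : V × Fin 2 → Fin (posetDim (etensorRel G K2dir)) → ℝ,
      Realizes (etensorRel G K2dir) φ := Nat.sInf_mem (et_nonempty G)
  exact Nat.sInf_le ⟨_, combine_realizes G φ hφ C⟩
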